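/- Let k be a commutative ring and Ω a semigroup. Let (T, {≺_ω, ≻_ω | ω ∈ Ω}, ·) be a tridendriform family algebra over k. Define bilinear operations on T ⊗ kΩ by (x ⊗ α) ≺ (y ⊗ β) := (x ≺_β y) ⊗ αβ, (x ⊗ α) ≻ (y ⊗ β) := (x ≻_α y) ⊗ αβ, and (x ⊗ α) • (y ⊗ β) := (x·y) ⊗ αβ for x, y ∈ T and α, β ∈ Ω. Then (T ⊗ kΩ, ≺, ≻, •) is a tridendriform algebra, i.e. for all u, v, w ∈ T ⊗ kΩ: (u ≺ v) ≺ w = u ≺ (v ≺ w + v ≻ w + v • w), (u ≻ v) ≺ w = u ≻ (v ≺ w), (u ≺ v + u ≻ v + u • v) ≻ w = u ≻ (v ≻ w), (u ≻ v) • w = u ≻ (v • w), (u ≺ v) • w = u • (v ≻ w), (u • v) ≺ w = u • (v ≺ w), and (u • v) • w = u • (v • w). -/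

import Mathlib

open scoped TensorProduct

/-- Let `(T, {≺_ω, ≻_ω | ω ∈ Ω}, ·)` be a tridendriform family algebra
over a commutative ring `k`, `Ω` a semigroup, and let `kΩ := Ω →₀ k` be the free
`k`-module on `Ω`.  The bilinear operations on `T ⊗ kΩ` determined by
`(x ⊗ α) ≺ (y ⊗ β) := (x ≺_β y) ⊗ αβ`, `(x ⊗ α) ≻ (y ⊗ β) := (x ≻_α y) ⊗ αβ` and
`(x ⊗ α) • (y ⊗ β) := (x·y) ⊗ αβ` make `T ⊗ kΩ` a tridendriform algebra. -/
theorem tridendriformFamily_tensor_tridendriform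
    {k T Ω : Type*} [CommRing k] [AddCommGroup T] [Module k T] [Semigroup Ω]
    (prec succ : Ω → T →ₗ[k] T →ₗ[k] T) (dot : T →ₗ[k] T →ₗ[k] T)
    (h1 : ∀ (α β : Ω) (x y z : T),
      prec β (prec α x y) z = prec (α * β) x (prec β y z + succ α y z + dot y z))
    (h2 : ∀ (α β : Ω) (x y z : T),
      prec β (succ α x y) z = succ α x (prec β y z))
    (h3 : ∀ (α β : Ω) (x y z : T),
      succ (α * β) (prec β x y + succ α x y + dot x y) z = succ α x (succ β y z))
    (h4 : ∀ (α : Ω) (x y z : T), dot (succ α x y) z = succ α x (dot y z))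
    (h5 : ∀ (α : Ω) (x y z : T), dot (prec α x y) z = dot x (succ α y z))
    (h6 : ∀ (α : Ω) (x y z : T), prec α (dot x y) z = dot x (prec α y z))
    (h7 : ∀ x y z : T, dot (dot x y) z = dot x (dot y z))
    (Prec Succ Dot :
      (T ⊗[k] (Ω →₀ k)) →ₗ[k] (T ⊗[k] (Ω →₀ k)) →ₗ[k] (T ⊗[k] (Ω →₀ k)))
    (hPrec : ∀ (x y : T) (α β : Ω),
      Prec (x ⊗ₜ[k] Finsupp.single α 1) (y ⊗ₜ[k] Finsupp.single β 1)
        = (prec β x y) ⊗ₜ[k] Finsupp.single (α * β) 1)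
    (hSucc : ∀ (x y : T) (α β : Ω),
      Succ (x ⊗ₜ[k] Finsupp.single α 1) (y ⊗ₜ[k] Finsupp.single β 1)
        = (succ α x y) ⊗ₜ[k] Finsupp.single (α * β) 1)
    (hDot : ∀ (x y : T) (α β : Ω),
      Dot (x ⊗ₜ[k] Finsupp.single α 1) (y ⊗ₜ[k] Finsupp.single β 1)
        = (dot x y) ⊗ₜ[k] Finsupp.single (α * β) 1) :
    ∀ u v w : T ⊗[k] (Ω →₀ k),
      Prec (Prec u v) w = Prec u (Prec v w + Succ v w + Dot v w) ∧
      Prec (Succ u v) w = Succ u (Prec v w) ∧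
      Succ (Prec u v + Succ u v + Dot u v) w = Succ u (Succ v w) ∧
      Dot (Succ u v) w = Succ u (Dot v w) ∧
      Dot (Prec u v) w = Dot u (Succ v w) ∧
      Prec (Dot u v) w = Dot u (Prec v w) ∧
      Dot (Dot u v) w = Dot u (Dot v w) := by

  have hspan : Submodule.span k
      {m : T ⊗[k] (Ω →₀ k) | ∃ x α, m = x ⊗ₜ[k] Finsupp.single α 1} = ⊤ := by
    rw [eq_top_iff]
    rintro m -
    induction m using TensorProduct.induction_on with
    | zero => exact Submodule.zero_mem _
    | tmul x f =>
      induction f using Finsupp.induction_linear with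
      | zero => simp
      | add f g hf hg => rw [TensorProduct.tmul_add]; exact Submodule.add_mem _ hf hg
      | single a b =>
        have hs : Finsupp.single a b = b • Finsupp.single a (1 : k) := by
          rw [Finsupp.smul_single', mul_one]
        rw [hs, TensorProduct.tmul_smul]
        exact Submodule.smul_mem _ _ (Submodule.subset_span ⟨x, a, rfl⟩)
    | add u v hu hv => exact Submodule.add_mem _ hu hv
  have key : ∀ (A B C D :
      (T ⊗[k] (Ω →₀ k)) →ₗ[k] (T ⊗[k] (Ω →₀ k)) →ₗ[k] (T ⊗[k] (Ω →₀ k))),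
      (∀ (x y z : T) (α β γ : Ω),
        B (A (x ⊗ₜ[k] Finsupp.single α 1) (y ⊗ₜ[k] Finsupp.single β 1))
            (z ⊗ₜ[k] Finsupp.single γ 1)
          = C (x ⊗ₜ[k] Finsupp.single α 1)
              (D (y ⊗ₜ[k] Finsupp.single β 1) (z ⊗ₜ[k] Finsupp.single γ 1))) →
      ∀ u v w, B (A u v) w = C u (D v w) := by
    intro A B C D h u v w
    have heq : A.compr₂ B = ((LinearMap.llcomp k _ _ _).comp C).compl₂ D := by
      apply LinearMap.ext_on hspan; rintro _ ⟨x, α, rfl⟩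
      apply LinearMap.ext_on hspan; rintro _ ⟨y, β, rfl⟩
      apply LinearMap.ext_on hspan; rintro _ ⟨z, γ, rfl⟩
      simpa using h x y z α β γ
    have := LinearMap.congr_fun (LinearMap.congr_fun (LinearMap.congr_fun heq u) v) w
    simpa using this
  intro u v w
  refine ⟨?_, ?_, ?_, ?_, ?_, ?_, ?_⟩
  · have := key Prec Prec Prec (Prec + Succ + Dot) (fun x y z α β γ => by
      simp only [LinearMap.add_apply, hPrec, hSucc, hDot, ← TensorProduct.add_tmul,
        h1, mul_assoc]) u v w
    simpa only [LinearMap.add_apply] using this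
  · exact key Succ Prec Succ Prec (fun x y z α β γ => by
      simp only [hPrec, hSucc, h2, mul_assoc]) u v w
  · have := key (Prec + Succ + Dot) Succ Succ Succ (fun x y z α β γ => by
      simp only [LinearMap.add_apply, hPrec, hSucc, hDot, ← TensorProduct.add_tmul,
        h3, mul_assoc]) u v w
    simpa only [LinearMap.add_apply] using this
  · exact key Succ Dot Succ Dot (fun x y z α β γ => by
      simp only [hSucc, hDot, h4, mul_assoc]) u v w
  · exact key Prec Dot Dot Succ (fun x y z α β γ => by
      simp only [hPrec, hSucc, hDot, h5, mul_assoc]) u v w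
  · exact key Dot Prec Dot Prec (fun x y z α β γ => by
      simp only [hPrec, hDot, h6, mul_assoc]) u v w
  · exact key Dot Dot Dot Dot (fun x y z α β γ => by
      simp only [hDot, h7, mul_assoc]) u v w
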